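/- Any monotone word p ∈ [m]^n with p · Δ = Δ + n must remove the n-generators of Δ in increasing order: if a_0 < a_1 < ... < a_{n-1} are the n-generators of Δ, then the element removed at step i is a_i. -/

import Mathlib

/-- The shift of a set of integers: `Δ + k`. -/
def shiftSet (Δ : Set ℤ) (k : ℤ) : Set ℤ := (· + k) '' Δ

/-- `Δ` is `k`-invariant if `Δ + k ⊆ Δ`. -/
def Invariant (k : ℤ) (Δ : Set ℤ) : Prop := shiftSet Δ k ⊆ Δ

/-- `Δ` is bounded (has a minimum element). -/
def HasMin (Δ : Set ℤ) : Prop := ∃ a ∈ Δ, ∀ x ∈ Δ, a ≤ x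

/-- `Δ` is co-bounded: contains all sufficiently large integers. -/
def CoBounded (Δ : Set ℤ) : Prop := ∃ N : ℤ, ∀ x : ℤ, N ≤ x → x ∈ Δ

/-- The `k`-generators of `Δ`: elements `a ∈ Δ` with `a - k ∉ Δ`, i.e. `Δ \ (Δ + k)`. -/
def gens (k : ℤ) (Δ : Set ℤ) : Set ℤ := Δ \ shiftSet Δ k

/-- The `(j+1)`-st smallest element of a set of integers. -/
noncomputable def nthSmallest : ℕ → Set ℤ → ℤ
  | 0, S => sInf S
  | j+1, S => nthSmallest j (S \ {sInf S})

/-- The letter `j ∈ [m]` acts on an `m`-invariant set by removing its `(j+1)`-st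
smallest `m`-generator. -/
noncomputable def letterAct (m : ℤ) (j : ℕ) (Δ : Set ℤ) : Set ℤ :=
  Δ \ {nthSmallest j (gens m Δ)}

/-- `steps m p Δ i = p_{i-1} ⋯ p_1 p_0 ⋅ Δ`: the word acts one letter at a
time, the letter `p 0` (rightmost) acting first. -/
noncomputable def steps (m : ℤ) (p : ℕ → ℕ) (Δ : Set ℤ) : ℕ → Set ℤ
  | 0 => Δ
  | i+1 => letterAct m (p i) (steps m p Δ i)

lemma nthSmallest_spec : ∀ (j : ℕ) (S : Set ℤ), S.Finite → j < S.ncard →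
    nthSmallest j S ∈ S ∧ (S ∩ Set.Iio (nthSmallest j S)).ncard = j := by
  intro j
  induction j with
  | zero =>
    intro S hS hcard
    have hne : S.Nonempty := Set.nonempty_of_ncard_ne_zero (by omega)
    have hmem : sInf S ∈ S := hne.csInf_mem hS
    have hempty : S ∩ Set.Iio (sInf S) = ∅ := by
      ext x
      simp only [Set.mem_inter_iff, Set.mem_Iio, Set.mem_empty_iff_false, iff_false, not_and,
        not_lt]
      intro hx
      exact csInf_le hS.bddBelow hx
    constructor
    · simpa [nthSmallest] using hmem
    · simp only [nthSmallest, hempty, Set.ncard_empty]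
  | succ j ih =>
    intro S hS hcard
    have hne : S.Nonempty := Set.nonempty_of_ncard_ne_zero (by omega)
    have hmin : sInf S ∈ S := hne.csInf_mem hS
    have hS'fin : (S \ {sInf S}).Finite := hS.diff
    have hcard' : (S \ {sInf S}).ncard = S.ncard - 1 :=
      Set.ncard_diff_singleton_of_mem hmin
    have hj : j < (S \ {sInf S}).ncard := by omega
    obtain ⟨hxmem, hxcard⟩ := ih (S \ {sInf S}) hS'fin hj
    have hstep : nthSmallest (j + 1) S = nthSmallest j (S \ {sInf S}) := rfl
    set x := nthSmallest j (S \ {sInf S}) with hx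
    have hxS : x ∈ S := hxmem.1
    have hxne : x ≠ sInf S := by simpa using hxmem.2
    have hlt : sInf S < x := lt_of_le_of_ne (csInf_le hS.bddBelow hxS) (Ne.symm hxne)
    refine ⟨hstep ▸ hxS, ?_⟩
    have hset : S ∩ Set.Iio x = insert (sInf S) ((S \ {sInf S}) ∩ Set.Iio x) := by
      ext y
      simp only [Set.mem_inter_iff, Set.mem_Iio, Set.mem_insert_iff, Set.mem_diff,
        Set.mem_singleton_iff]
      constructor
      · rintro ⟨hyS, hylt⟩
        by_cases h : y = sInf S
        · exact Or.inl h
        · exact Or.inr ⟨⟨hyS, h⟩, hylt⟩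
      · rintro (h | ⟨⟨hyS, _⟩, hylt⟩)
        · exact ⟨h ▸ hmin, h ▸ hlt⟩
        · exact ⟨hyS, hylt⟩
    rw [hstep, hset, Set.ncard_insert_of_notMem (by simp) (hS'fin.inter_of_left _), hxcard]

lemma gens_finite {k : ℤ} {S : Set ℤ} (hk : 0 < k) (hbd : ∃ a : ℤ, ∀ x ∈ S, a ≤ x)
    (hcb : ∃ N : ℤ, ∀ x : ℤ, N ≤ x → x ∈ S) : (gens k S).Finite := by
  obtain ⟨a, ha⟩ := hbd
  obtain ⟨N, hN⟩ := hcb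
  apply (Set.finite_Ico a (N + k)).subset
  rintro x ⟨hxS, hxn⟩
  refine ⟨ha x hxS, ?_⟩
  by_contra h
  push_neg at h
  exact hxn ⟨x - k, hN _ (by omega), by ring⟩

lemma gens_card {m : ℕ} {S : Set ℤ} (hm : 0 < m) (hbd : ∃ a : ℤ, ∀ x ∈ S, a ≤ x)
    (hcb : ∃ N : ℤ, ∀ x : ℤ, N ≤ x → x ∈ S) : m ≤ (gens (m : ℤ) S).ncard := by
  obtain ⟨N, hN⟩ := hcb
  have hfin : (gens (m : ℤ) S).Finite := gens_finite (by exact_mod_cast hm) hbd ⟨N, hN⟩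
  set T : Fin m → Set ℤ := fun j => {x : ℤ | x ∈ S ∧ (m : ℤ) ∣ x - (j : ℤ)} with hT
  have hTne : ∀ j : Fin m, (T j).Nonempty := by
    intro j
    refine ⟨(j : ℤ) + m * max N 0, hN _ ?_, ⟨max N 0, by ring⟩⟩
    have h1 : (0 : ℤ) ≤ (j : ℤ) := by positivity
    have h2 : (max N 0 : ℤ) ≤ m * max N 0 := by
      nlinarith [le_max_right N 0, (by exact_mod_cast hm : (1 : ℤ) ≤ m)]
    have := le_max_left N 0
    omega
  have hTbd : ∀ j : Fin m, BddBelow (T j) := by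
    obtain ⟨a, ha⟩ := hbd
    exact fun j => ⟨a, fun x hx => ha x hx.1⟩
  set f : Fin m → ℤ := fun j => sInf (T j) with hf
  have hfmemT : ∀ j, f j ∈ T j := fun j => Int.csInf_mem (hTne j) (hTbd j)
  have hfmem : ∀ j, f j ∈ gens (m : ℤ) S := by
    intro j
    refine ⟨(hfmemT j).1, ?_⟩
    rintro ⟨y, hy, hyx⟩
    have hyx' : y + (m : ℤ) = f j := hyx
    have hyT : y ∈ T j := by
      refine ⟨hy, ?_⟩
      obtain ⟨c, hc⟩ := (hfmemT j).2
      exact ⟨c - 1, by rw [mul_sub, mul_one]; linarith [hyx']⟩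
    have hle : f j ≤ y := csInf_le (hTbd j) hyT
    have hmpos : (0 : ℤ) < m := by exact_mod_cast hm
    omega
  have hinj : Function.Injective f := by
    intro j k hjk
    obtain ⟨c, hc⟩ := (hfmemT j).2
    obtain ⟨d, hd⟩ := (hfmemT k).2
    have hdvd : (m : ℤ) ∣ (j : ℤ) - (k : ℤ) := ⟨d - c, by rw [hjk] at hc; rw [mul_sub]; linarith⟩
    have habs : |(j : ℤ) - (k : ℤ)| < m := by
      have := j.isLt; have := k.isLt
      rw [abs_lt]
      constructor <;> [skip; skip] <;>
        · push_cast; omega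
    have := Int.eq_zero_of_abs_lt_dvd hdvd habs
    have : (j : ℤ) = (k : ℤ) := by omega
    exact Fin.ext (by exact_mod_cast this)
  calc (m : ℕ) = (Set.univ : Set (Fin m)).ncard := by simp [Set.ncard_univ]
    _ = (f '' Set.univ).ncard := (Set.ncard_image_of_injective _ hinj).symm
    _ ≤ (gens (m : ℤ) S).ncard := by
        apply Set.ncard_le_ncard _ hfin
        rintro x ⟨j, -, rfl⟩
        exact hfmem j

/-- The element removed at step `i`. -/
noncomputable def remEl (m : ℤ) (p : ℕ → ℕ) (Δ : Set ℤ) (i : ℕ) : ℤ :=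
  nthSmallest (p i) (gens m (steps m p Δ i))

theorem monotone_removes_in_order (m n : ℕ) (hm : 0 < m) (hn : 0 < n) (Δ : Set ℤ)
    (hIm : Invariant m Δ) (hIn : Invariant n Δ) (hb : HasMin Δ) (hc : CoBounded Δ)
    (p : ℕ → ℕ) (hp : ∀ i < n, p i < m)
    (hmono : ∀ i j : ℕ, i ≤ j → j < n → p i ≤ p j)
    (hact : steps m p Δ n = shiftSet Δ n)
    (a : Fin n → ℤ) (ha : StrictMono a) (hrange : Set.range a = gens n Δ) :
    ∀ i : Fin n, steps m p Δ i \ steps m p Δ (i + 1) = {a i} := by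
  obtain ⟨a0, ha0S, ha0⟩ := hb
  have hstep : ∀ i : ℕ, steps (m : ℤ) p Δ (i + 1)
      = steps (m : ℤ) p Δ i \ {remEl m p Δ i} := fun _ => rfl
  have hsub : ∀ i : ℕ, steps (m : ℤ) p Δ i ⊆ Δ := by
    intro i
    induction i with
    | zero => exact fun x hx => hx
    | succ i ih =>
      rw [hstep i]
      exact fun x hx => ih hx.1
  have hcb : ∀ i : ℕ, CoBounded (steps (m : ℤ) p Δ i) := by
    intro i
    induction i with
    | zero => exact hc
    | succ i ih =>
      obtain ⟨N, hN⟩ := ih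
      refine ⟨max N (remEl m p Δ i + 1), fun x hx => ?_⟩
      rw [hstep i]
      refine ⟨hN x (le_trans (le_max_left _ _) hx), ?_⟩
      simp only [Set.mem_singleton_iff]
      have := le_max_right N (remEl m p Δ i + 1)
      omega
  have hGfin : ∀ i : ℕ, (gens (m : ℤ) (steps (m : ℤ) p Δ i)).Finite := by
    intro i
    exact gens_finite (by exact_mod_cast hm) ⟨a0, fun x hx => ha0 x (hsub i hx)⟩ (hcb i)
  have hGcard : ∀ i : ℕ, m ≤ (gens (m : ℤ) (steps (m : ℤ) p Δ i)).ncard := fun i =>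
    gens_card hm ⟨a0, fun x hx => ha0 x (hsub i hx)⟩ (hcb i)
  have hkey : ∀ i, i < n → remEl m p Δ i ∈ gens (m : ℤ) (steps (m : ℤ) p Δ i) ∧
      ((gens (m : ℤ) (steps (m : ℤ) p Δ i)) ∩ Set.Iio (remEl m p Δ i)).ncard = p i :=
    fun i hi => nthSmallest_spec (p i) _ (hGfin i) (lt_of_lt_of_le (hp i hi) (hGcard i))
  have hadj : ∀ i, i + 1 < n → remEl m p Δ i < remEl m p Δ (i + 1) := by
    intro i hi1
    have hi : i < n := by omega
    obtain ⟨hri, hci⟩ := hkey i hi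
    obtain ⟨hri1, hci1⟩ := hkey (i + 1) hi1
    have hGset : gens (m : ℤ) (steps (m : ℤ) p Δ (i + 1)) ∩ Set.Iic (remEl m p Δ i)
        = gens (m : ℤ) (steps (m : ℤ) p Δ i) ∩ Set.Iio (remEl m p Δ i) := by
      rw [hstep i]
      ext x
      simp only [gens, shiftSet, Set.mem_inter_iff, Set.mem_Iic, Set.mem_Iio, Set.mem_diff,
        Set.mem_singleton_iff, Set.mem_image, not_exists, not_and]
      constructor
      · rintro ⟨⟨⟨hxΔ, hxr⟩, hxsh⟩, hxle⟩
        have hxlt : x < remEl m p Δ i := lt_of_le_of_ne hxle hxr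
        refine ⟨⟨hxΔ, fun y hy hyx => ?_⟩, hxlt⟩
        by_cases hyr : y = remEl m p Δ i
        · rw [hyr] at hyx
          have hm' : (0 : ℤ) < m := by exact_mod_cast hm
          omega
        · exact hxsh y ⟨hy, hyr⟩ hyx
      · rintro ⟨⟨hxΔ, hxsh⟩, hxlt⟩
        exact ⟨⟨⟨hxΔ, ne_of_lt hxlt⟩, fun y hy hyx => hxsh y hy.1 hyx⟩, le_of_lt hxlt⟩
    by_contra hle
    push_neg at hle
    have h1 : gens (m : ℤ) (steps (m : ℤ) p Δ (i + 1)) ∩ Set.Iic (remEl m p Δ (i + 1))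
        ⊆ gens (m : ℤ) (steps (m : ℤ) p Δ (i + 1)) ∩ Set.Iic (remEl m p Δ i) :=
      Set.inter_subset_inter_right _ (Set.Iic_subset_Iic.mpr hle)
    have h2 : (gens (m : ℤ) (steps (m : ℤ) p Δ (i + 1)) ∩ Set.Iic (remEl m p Δ (i + 1))).ncard
        ≤ (gens (m : ℤ) (steps (m : ℤ) p Δ (i + 1)) ∩ Set.Iic (remEl m p Δ i)).ncard :=
      Set.ncard_le_ncard h1 ((hGfin (i + 1)).inter_of_left _)
    have h3 : gens (m : ℤ) (steps (m : ℤ) p Δ (i + 1)) ∩ Set.Iic (remEl m p Δ (i + 1))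
        = insert (remEl m p Δ (i + 1))
            (gens (m : ℤ) (steps (m : ℤ) p Δ (i + 1)) ∩ Set.Iio (remEl m p Δ (i + 1))) := by
      ext x
      simp only [Set.mem_inter_iff, Set.mem_Iic, Set.mem_insert_iff, Set.mem_Iio]
      constructor
      · rintro ⟨hxg, hxle⟩
        rcases eq_or_lt_of_le hxle with h | h
        · exact Or.inl h
        · exact Or.inr ⟨hxg, h⟩
      · rintro (rfl | ⟨hxg, hxlt⟩)
        · exact ⟨hri1, le_refl _⟩
        · exact ⟨hxg, le_of_lt hxlt⟩
    rw [h3, Set.ncard_insert_of_notMem (by simp) ((hGfin (i + 1)).inter_of_left _), hci1] at h2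
    rw [hGset, hci] at h2
    have := hmono i (i + 1) (by omega) hi1
    omega
  have hmonor : ∀ j, j < n → ∀ i, i < j → remEl m p Δ i < remEl m p Δ j := by
    intro j
    induction j with
    | zero => omega
    | succ j ih =>
      intro hj i hi
      rcases Nat.lt_succ_iff_lt_or_eq.mp hi with h | h
      · exact lt_trans (ih (by omega) i h) (hadj j hj)
      · subst h; exact hadj i hj
  have hsteps_eq : ∀ k : ℕ, steps (m : ℤ) p Δ k = Δ \ {x | ∃ j, j < k ∧ remEl m p Δ j = x} := by
    intro k
    induction k with
    | zero =>
      ext x; simp [steps]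
    | succ k ih =>
      rw [hstep k, ih]
      ext x
      simp only [Set.mem_diff, Set.mem_setOf_eq, Set.mem_singleton_iff, not_exists, not_and]
      constructor
      · rintro ⟨⟨hxΔ, hj⟩, hxr⟩
        refine ⟨hxΔ, fun j hjk => ?_⟩
        rcases Nat.lt_succ_iff_lt_or_eq.mp hjk with h | h
        · exact hj j h
        · subst h; exact fun hh => hxr hh.symm
      · rintro ⟨hxΔ, hj⟩
        exact ⟨⟨hxΔ, fun j hjk => hj j (by omega)⟩, fun hh => hj k (by omega) hh.symm⟩
  have hrΔ : ∀ j, j < n → remEl m p Δ j ∈ Δ := fun j hj => hsub j ((hkey j hj).1).1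
  have hfinal : Set.range a = Set.range (fun i : Fin n => remEl m p Δ (i : ℕ)) := by
    rw [hrange]
    have h1 : gens (n : ℤ) Δ = Δ \ steps (m : ℤ) p Δ n := by rw [hact]; rfl
    rw [h1, hsteps_eq n]
    ext x
    constructor
    · rintro ⟨hxΔ, hx2⟩
      rw [Set.mem_diff] at hx2
      push_neg at hx2
      obtain ⟨j, hj, hjx⟩ := hx2 hxΔ
      exact ⟨⟨j, hj⟩, hjx⟩
    · rintro ⟨⟨j, hj⟩, hjx⟩
      refine ⟨hjx ▸ hrΔ j hj, ?_⟩
      intro hcontra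
      exact hcontra.2 ⟨j, hj, hjx⟩
  have hbmono : StrictMono (fun i : Fin n => remEl m p Δ (i : ℕ)) := by
    intro i j hij
    exact hmonor j j.isLt i hij
  have haeq : a = fun i : Fin n => remEl m p Δ (i : ℕ) := by
    have hwf : WellFoundedLT (Fin n) := inferInstance
    exact (@StrictMono.range_inj (Fin n) ℤ _ _ hwf _ _ ha hbmono).mp hfinal
  intro i
  have hri : remEl m p Δ (i : ℕ) ∈ steps (m : ℤ) p Δ (i : ℕ) := ((hkey i i.isLt).1).1
  rw [hstep (i : ℕ), congrFun haeq i]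
  ext x
  simp only [Set.mem_diff, Set.mem_singleton_iff, not_and, not_not]
  constructor
  · rintro ⟨hx1, hx2⟩
    exact hx2 hx1
  · rintro rfl
    exact ⟨hri, fun _ => rfl⟩
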